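/- Weighted radial Hardy inequality: let δ > 0, η = 1/2 + δ, and let u : [0,∞) → ℝ be C¹ with compact support. Then ∫_0^∞ (1+ρ)^{2η−2} u(ρ)² ρ² dρ ≤ C(1 + δ^{-1})² ( ∫_0^∞ (1+ρ)^{2η} u'(ρ)² ρ² dρ + ∫_0^1 u(ρ)² ρ² dρ ) for a universal constant C. -/

import Mathlib

open MeasureTheory

/-- Weighted radial Hardy inequality: for η = 1/2 + δ and compactly supported C¹
functions u on [0,∞),
`∫₀^∞ (1+ρ)^{2η−2} u² ρ² dρ ≤ C (1+δ⁻¹)² (∫₀^∞ (1+ρ)^{2η} u'² ρ² dρ + ∫₀¹ u² ρ² dρ)`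
for a universal constant C. -/
theorem stmt16 : ∃ C : ℝ, 0 < C ∧
    ∀ (δ : ℝ), 0 < δ → ∀ u : ℝ → ℝ, ContDiff ℝ 1 u → HasCompactSupport u →
      (∫ ρ in Set.Ioi (0 : ℝ),
          (1 + ρ) ^ (2 * (1 / 2 + δ) - 2) * (u ρ) ^ 2 * ρ ^ 2)
        ≤ C * (1 + δ⁻¹) ^ 2 *
          ((∫ ρ in Set.Ioi (0 : ℝ),
              (1 + ρ) ^ (2 * (1 / 2 + δ)) * (deriv u ρ) ^ 2 * ρ ^ 2)
            + ∫ ρ in Set.Ioc (0 : ℝ) 1, (u ρ) ^ 2 * ρ ^ 2) := by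
  refine ⟨1, one_pos, ?_⟩
  intro δ hδ u hu hcu
  obtain ⟨r, hr⟩ := hcu.isBounded.subset_closedBall 0
  set R : ℝ := max r 1 + 1 with hRdef
  have hR1 : (1:ℝ) ≤ R := by
    have := le_max_right r 1
    simp only [hRdef]; linarith
  have h0R : (0:ℝ) ≤ R := by linarith
  have hts : ∀ ρ : ℝ, R ≤ ρ → ρ ∉ tsupport u := by
    intro ρ h hm
    have h2 := hr hm
    rw [Metric.mem_closedBall, Real.dist_eq, sub_zero] at h2
    have h3 : ρ ≤ r := (le_abs_self ρ).trans h2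
    have := le_max_left r 1
    simp only [hRdef] at h; linarith
  have hu0 : ∀ ρ : ℝ, R ≤ ρ → u ρ = 0 := fun ρ h =>
    image_eq_zero_of_notMem_tsupport (hts ρ h)
  have hd0 : ∀ ρ : ℝ, R ≤ ρ → deriv u ρ = 0 := by
    intro ρ h
    by_contra hne
    exact hts ρ h (support_deriv_subset (by simpa [Function.mem_support] using hne))
  have hucont : Continuous u := hu.continuous
  have hdcont : Continuous (deriv u) := hu.continuous_deriv le_rfl
  have hIcc : Set.uIcc (0:ℝ) R = Set.Icc 0 R := Set.uIcc_of_le h0R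
  -- continuity of rpow factors
  have hrp : ∀ p : ℝ, ContinuousOn (fun ρ : ℝ => (1+ρ) ^ p) (Set.Icc (0:ℝ) R) := by
    intro p
    refine ContinuousOn.rpow_const ?_ ?_
    · exact (continuous_const.add continuous_id).continuousOn
    · intro x hx
      exact Or.inl (by have := hx.1; intro h; linarith)
  -- interval integrabilities
  have intLHS : IntervalIntegrable
      (fun ρ => (1 + ρ) ^ (2 * (1 / 2 + δ) - 2) * (u ρ) ^ 2 * ρ ^ 2) volume 0 R := by
    apply ContinuousOn.intervalIntegrable
    rw [hIcc]
    exact ((hrp _).mul ((hucont.pow 2).continuousOn)).mul (continuous_pow 2).continuousOn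
  have intg : IntervalIntegrable
      (fun ρ => (1 + ρ) ^ (2 * (1 / 2 + δ)) * (deriv u ρ) ^ 2 * ρ ^ 2) volume 0 R := by
    apply ContinuousOn.intervalIntegrable
    rw [hIcc]
    exact ((hrp _).mul ((hdcont.pow 2).continuousOn)).mul (continuous_pow 2).continuousOn
  -- derivative of the boundary function
  have hDφ : ∀ x ∈ Set.uIcc (0:ℝ) R,
      HasDerivAt (fun ρ : ℝ => ρ ^ 2 * (1+ρ) ^ (2*δ) * (u ρ) ^ 2)
        ((2*x*(1+x) ^ (2*δ) + x ^ 2 * (2*δ*(1+x) ^ (2*δ-1))) * (u x) ^ 2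
          + x ^ 2 * (1+x) ^ (2*δ) * (2 * u x * deriv u x)) x := by
    intro x hx
    rw [hIcc] at hx
    have hx1 : (0:ℝ) < 1 + x := by linarith [hx.1]
    have h1 : HasDerivAt (fun ρ : ℝ => 1 + ρ) 1 x := by
      simpa using (hasDerivAt_id x).const_add 1
    have h2 : HasDerivAt (fun ρ : ℝ => (1+ρ) ^ (2*δ)) (1 * (2*δ) * (1+x) ^ (2*δ-1)) x :=
      h1.rpow_const (Or.inl hx1.ne')
    have h3 : HasDerivAt (fun ρ : ℝ => ρ ^ 2) (2*x) x := by
      simpa using hasDerivAt_pow 2 x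
    have h5 : HasDerivAt u (deriv u x) x :=
      ((hu.differentiable one_ne_zero) x).hasDerivAt
    have h6 : HasDerivAt (fun ρ => (u ρ) ^ 2) (2 * u x * deriv u x) x := by
      simpa using h5.fun_pow 2
    have := ((h3.fun_mul h2).fun_mul h6)
    refine this.congr_deriv ?_
    ring
  have intD : IntervalIntegrable
      (fun x => (2*x*(1+x) ^ (2*δ) + x ^ 2 * (2*δ*(1+x) ^ (2*δ-1))) * (u x) ^ 2
          + x ^ 2 * (1+x) ^ (2*δ) * (2 * u x * deriv u x)) volume 0 R := by
    apply ContinuousOn.intervalIntegrable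
    rw [hIcc]
    apply ContinuousOn.add
    · exact (((continuous_const.mul continuous_id).continuousOn.mul (hrp _)).add
        ((continuous_pow 2).continuousOn.mul (continuousOn_const.mul (hrp _)))).mul
        ((hucont.pow 2).continuousOn)
    · exact (((continuous_pow 2).continuousOn.mul (hrp _))).mul
        (((continuous_const.mul hucont).mul hdcont).continuousOn)
  -- FTC: the integral of the derivative vanishes
  have hFTC : (∫ x in (0:ℝ)..R,
      ((2*x*(1+x) ^ (2*δ) + x ^ 2 * (2*δ*(1+x) ^ (2*δ-1))) * (u x) ^ 2
          + x ^ 2 * (1+x) ^ (2*δ) * (2 * u x * deriv u x))) = 0 := by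
    rw [intervalIntegral.integral_eq_sub_of_hasDerivAt hDφ intD]
    simp [hu0 R le_rfl]
  -- pointwise inequality
  have hpt : ∀ x ∈ Set.Icc (0:ℝ) R,
      δ^2 * ((1 + x) ^ (2 * (1 / 2 + δ) - 2) * (u x) ^ 2 * x ^ 2)
        ≤ δ * ((2*x*(1+x) ^ (2*δ) + x ^ 2 * (2*δ*(1+x) ^ (2*δ-1))) * (u x) ^ 2
            + x ^ 2 * (1+x) ^ (2*δ) * (2 * u x * deriv u x))
          + (1 + x) ^ (2 * (1 / 2 + δ)) * (deriv u x) ^ 2 * x ^ 2 := by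
    intro x hx
    have ht : (0:ℝ) < 1 + x := by linarith [hx.1]
    have hA : 0 < (1+x) ^ (2*δ-1) := Real.rpow_pos_of_pos ht _
    have e1 : (1+x) ^ (2*(1/2+δ)-2) = (1+x) ^ (2*δ-1) := by
      rw [show (2*(1/2+δ)-2 : ℝ) = 2*δ-1 by ring]
    have e2 : (1+x) ^ (2*(1/2+δ)) = (1+x) ^ (2*δ-1) * (1+x)^2 := by
      rw [pow_two, ← mul_assoc, ← Real.rpow_add_one ht.ne', ← Real.rpow_add_one ht.ne']
      congr 1; ring
    have e3 : (1+x) ^ (2*δ) = (1+x) ^ (2*δ-1) * (1+x) := by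
      rw [← Real.rpow_add_one ht.ne']
      congr 1; ring
    rw [e1, e2, e3]
    nlinarith [mul_nonneg hA.le (sq_nonneg (δ * x * u x + (1+x) * x * deriv u x)),
      mul_nonneg (mul_nonneg (mul_nonneg hδ.le ht.le) hx.1)
        (mul_nonneg hA.le (sq_nonneg (u x)))]
  -- integrate the inequality
  have key : δ^2 * (∫ x in (0:ℝ)..R, (1 + x) ^ (2 * (1 / 2 + δ) - 2) * (u x) ^ 2 * x ^ 2)
      ≤ ∫ x in (0:ℝ)..R, (1 + x) ^ (2 * (1 / 2 + δ)) * (deriv u x) ^ 2 * x ^ 2 := by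
    have mono := intervalIntegral.integral_mono_on h0R (intLHS.const_mul (δ^2))
      ((intD.const_mul δ).add intg) hpt
    rwa [intervalIntegral.integral_const_mul,
      intervalIntegral.integral_add (intD.const_mul δ) intg,
      intervalIntegral.integral_const_mul, hFTC, mul_zero, zero_add] at mono
  -- identify interval integrals with the Ioi integrals
  have eqL : (∫ ρ in Set.Ioi (0:ℝ), (1 + ρ) ^ (2 * (1 / 2 + δ) - 2) * (u ρ) ^ 2 * ρ ^ 2)
      = ∫ x in (0:ℝ)..R, (1 + x) ^ (2 * (1 / 2 + δ) - 2) * (u x) ^ 2 * x ^ 2 := by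
    rw [intervalIntegral.integral_of_le h0R]
    apply setIntegral_eq_of_subset_of_forall_diff_eq_zero measurableSet_Ioi
      Set.Ioc_subset_Ioi_self
    intro x hx
    have : R < x := by
      rcases hx with ⟨hx1, hx2⟩
      simp only [Set.mem_Ioc, not_and, not_le] at hx2
      exact hx2 hx1
    rw [hu0 x this.le]; ring
  have eqJ : (∫ ρ in Set.Ioi (0:ℝ), (1 + ρ) ^ (2 * (1 / 2 + δ)) * (deriv u ρ) ^ 2 * ρ ^ 2)
      = ∫ x in (0:ℝ)..R, (1 + x) ^ (2 * (1 / 2 + δ)) * (deriv u x) ^ 2 * x ^ 2 := by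
    rw [intervalIntegral.integral_of_le h0R]
    apply setIntegral_eq_of_subset_of_forall_diff_eq_zero measurableSet_Ioi
      Set.Ioc_subset_Ioi_self
    intro x hx
    have : R < x := by
      rcases hx with ⟨hx1, hx2⟩
      simp only [Set.mem_Ioc, not_and, not_le] at hx2
      exact hx2 hx1
    rw [hd0 x this.le]; ring
  -- nonnegativity of the right-hand side pieces
  have hJ : 0 ≤ ∫ ρ in Set.Ioi (0:ℝ), (1 + ρ) ^ (2 * (1 / 2 + δ)) * (deriv u ρ) ^ 2 * ρ ^ 2 := by
    apply setIntegral_nonneg measurableSet_Ioi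
    intro x hx
    have : (0:ℝ) < 1 + x := by have : (0:ℝ) < x := hx; linarith
    exact mul_nonneg (mul_nonneg (Real.rpow_nonneg this.le _) (sq_nonneg _)) (sq_nonneg _)
  have hK : 0 ≤ ∫ ρ in Set.Ioc (0:ℝ) 1, (u ρ) ^ 2 * ρ ^ 2 := by
    apply setIntegral_nonneg measurableSet_Ioc
    intro x _
    exact mul_nonneg (sq_nonneg _) (sq_nonneg _)
  have key2 : δ^2 * (∫ ρ in Set.Ioi (0:ℝ), (1 + ρ) ^ (2 * (1 / 2 + δ) - 2) * (u ρ) ^ 2 * ρ ^ 2)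
      ≤ ∫ ρ in Set.Ioi (0:ℝ), (1 + ρ) ^ (2 * (1 / 2 + δ)) * (deriv u ρ) ^ 2 * ρ ^ 2 := by
    rw [eqL, eqJ]; exact key
  set I := ∫ ρ in Set.Ioi (0:ℝ), (1 + ρ) ^ (2 * (1 / 2 + δ) - 2) * (u ρ) ^ 2 * ρ ^ 2 with hI
  set J := ∫ ρ in Set.Ioi (0:ℝ), (1 + ρ) ^ (2 * (1 / 2 + δ)) * (deriv u ρ) ^ 2 * ρ ^ 2 with hJdef
  set K := ∫ ρ in Set.Ioc (0:ℝ) 1, (u ρ) ^ 2 * ρ ^ 2 with hKdef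
  have key3 : I ≤ δ⁻¹^2 * J := by
    have h1 : δ⁻¹^2 * (δ^2 * I) ≤ δ⁻¹^2 * J :=
      mul_le_mul_of_nonneg_left key2 (by positivity)
    have h2 : δ⁻¹^2 * (δ^2 * I) = I := by field_simp
    linarith
  have h3 : δ⁻¹^2 ≤ (1+δ⁻¹)^2 := by nlinarith [inv_pos.mpr hδ]
  have h4 : δ⁻¹^2 * J ≤ (1+δ⁻¹)^2 * J := mul_le_mul_of_nonneg_right h3 hJ
  have h5 : (1+δ⁻¹)^2 * J ≤ (1+δ⁻¹)^2 * (J + K) := by nlinarith [sq_nonneg (1+δ⁻¹)]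
  rw [one_mul]
  linarith
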